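/- Suppose that for every probability vector c on S and every permutation σ of S one has D(ν ‖ μ_{c∘σ}) = D(ν ‖ μ_c). Then the uniform mixture minimizes the reverse divergence: for every probability vector c on S, D(ν ‖ μ_u) ≤ D(ν ‖ μ_c), where u is the uniform probability vector u(x) = 1/|S| for all x ∈ S. -/

import Mathlib

open MeasureTheory
open scoped ENNReal

open scoped Classical in
/-- Kullback–Leibler divergence between two measures, valued in `[0,∞]`. -/
noncomputable def klDiv {𝒵 : Type*} [MeasurableSpace 𝒵] (μ ν : Measure 𝒵) : ℝ≥0∞ :=
  if μ ≪ ν ∧ Integrable (llr μ ν) μ then ENNReal.ofReal (∫ z, llr μ ν z ∂μ) else ⊤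

/-- The mixture measure `μ_c = ∑ x, c x • μ x` associated with a (probability) vector `c`. -/
noncomputable def mix {S 𝒵 : Type*} [Fintype S] [MeasurableSpace 𝒵]
    (μ : S → Measure 𝒵) (c : S → ℝ) : Measure 𝒵 :=
  ∑ x : S, ENNReal.ofReal (c x) • μ x

/-- A probability vector on a finite set. -/
def IsProbVec {S : Type*} [Fintype S] (c : S → ℝ) : Prop :=
  (∀ x, 0 ≤ c x) ∧ ∑ x : S, c x = 1

section Aux

open ProbabilityTheory

variable {S 𝒵 : Type*} [Fintype S] [MeasurableSpace 𝒵]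

lemma mix_isFiniteMeasure (μ : S → Measure 𝒵) [∀ x, IsProbabilityMeasure (μ x)]
    (c : S → ℝ) : IsFiniteMeasure (mix μ c) := by
  constructor
  rw [mix, Measure.finset_sum_apply]
  refine ENNReal.sum_lt_top.2 fun x _ => ?_
  simp [Measure.smul_apply, ENNReal.ofReal_lt_top]

lemma rnDeriv_finset_sum {ι : Type*} (s : Finset ι) (m : ι → Measure 𝒵)
    [∀ i, IsFiniteMeasure (m i)] (ν : Measure 𝒵) [IsFiniteMeasure ν] :
    (∑ i ∈ s, m i).rnDeriv ν =ᵐ[ν] ∑ i ∈ s, (m i).rnDeriv ν := by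
  classical
  induction s using Finset.cons_induction with
  | empty => simpa using Measure.rnDeriv_zero ν
  | cons a s ha ih =>
    rw [Finset.sum_cons, Finset.sum_cons]
    refine (Measure.rnDeriv_add _ _ _).trans ?_
    filter_upwards [ih] with z hz
    simp [hz]

lemma ofReal_sum_le' {ι : Type*} (s : Finset ι) (f : ι → ℝ) :
    ENNReal.ofReal (∑ i ∈ s, f i) ≤ ∑ i ∈ s, ENNReal.ofReal (f i) := by
  classical
  induction s using Finset.cons_induction with
  | empty => simp
  | cons a s ha ih =>
    rw [Finset.sum_cons, Finset.sum_cons]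
    exact (ENNReal.ofReal_add_le).trans (add_le_add_right ih _)

lemma klDiv_ne_top_elim {μ ν : Measure 𝒵} (h : klDiv μ ν ≠ ⊤) :
    μ ≪ ν ∧ Integrable (llr μ ν) μ := by
  by_contra hc
  rw [klDiv, if_neg hc] at h
  exact h rfl

lemma klDiv_eq_ofReal {μ ν : Measure 𝒵} (h1 : μ ≪ ν) (h2 : Integrable (llr μ ν) μ) :
    klDiv μ ν = ENNReal.ofReal (∫ z, llr μ ν z ∂μ) := by
  rw [klDiv, if_pos ⟨h1, h2⟩]

/-- The sum over all permutations of a probability vector is constant in `x`. -/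
lemma sum_perm_apply_const [DecidableEq S] [Nonempty S] {c : S → ℝ} (hc : IsProbVec c) (x : S) :
    ∑ σ : Equiv.Perm S, c (σ x) =
      (Fintype.card (Equiv.Perm S) : ℝ) / (Fintype.card S : ℝ) := by
  classical
  have hconst : ∀ x y : S, ∑ σ : Equiv.Perm S, c (σ x) = ∑ σ : Equiv.Perm S, c (σ y) := by
    intro x y
    have := Equiv.sum_comp (Equiv.mulRight (Equiv.swap x y)) (fun σ : Equiv.Perm S => c (σ y))
    simpa [Equiv.Perm.mul_apply, Equiv.swap_apply_right] using this
  have hsum : ∑ x : S, ∑ σ : Equiv.Perm S, c (σ x) = (Fintype.card (Equiv.Perm S) : ℝ) := by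
    rw [Finset.sum_comm]
    have : ∀ σ : Equiv.Perm S, ∑ x : S, c (σ x) = 1 := fun σ => by
      rw [Equiv.sum_comp σ c]; exact hc.2
    simp [this, Finset.card_univ]
  have hcard : (0 : ℝ) < (Fintype.card S : ℝ) := by
    exact_mod_cast Fintype.card_pos
  have : (Fintype.card S : ℝ) * (∑ σ : Equiv.Perm S, c (σ x)) =
      (Fintype.card (Equiv.Perm S) : ℝ) := by
    rw [← hsum]
    rw [Finset.sum_congr rfl (fun y _ => hconst y x)]
    simp [Finset.card_univ, mul_comm]
  rw [eq_div_iff hcard.ne', mul_comm]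
  exact this

/-- The sum of all permuted mixtures equals `card (Perm S)` times the uniform mixture. -/
lemma sum_perm_mix [DecidableEq S] [Nonempty S] (μ : S → Measure 𝒵) {c : S → ℝ} (hc : IsProbVec c) :
    ∑ σ : Equiv.Perm S, mix μ (fun x => c (σ x)) =
      (Fintype.card (Equiv.Perm S) : ℝ≥0∞) • mix μ (fun _ => 1 / (Fintype.card S : ℝ)) := by
  classical
  simp only [mix]
  rw [Finset.sum_comm, Finset.smul_sum]
  refine Finset.sum_congr rfl fun x _ => ?_
  rw [← Finset.sum_smul, smul_smul]
  congr 1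
  rw [← ENNReal.ofReal_sum_of_nonneg (fun σ _ => hc.1 _), sum_perm_apply_const hc x]
  rw [div_eq_mul_one_div, ENNReal.ofReal_mul (by positivity), ENNReal.ofReal_natCast]

end Aux

theorem uniform_mix_minimizes_klDiv_right {S 𝒵 : Type*} [Fintype S] [Nonempty S]
    [MeasurableSpace 𝒵] (μ : S → Measure 𝒵) (ν : Measure 𝒵)
    [∀ x, IsProbabilityMeasure (μ x)] [IsProbabilityMeasure ν]
    (hperm : ∀ (c : S → ℝ), IsProbVec c → ∀ σ : Equiv.Perm S,
      klDiv ν (mix μ (fun x => c (σ x))) = klDiv ν (mix μ c)) :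
    ∀ (c : S → ℝ), IsProbVec c →
      klDiv ν (mix μ (fun _ => 1 / (Fintype.card S : ℝ))) ≤ klDiv ν (mix μ c) := by
  classical
  intro c hc
  by_cases htop : klDiv ν (mix μ c) = ⊤
  · rw [htop]; exact le_top
  -- notation
  set N : ℕ := Fintype.card (Equiv.Perm S) with hN
  have hNpos : 0 < N := Fintype.card_pos
  have hNR : (0 : ℝ) < (N : ℝ) := by exact_mod_cast hNpos
  set m : Measure 𝒵 := mix μ (fun _ => 1 / (Fintype.card S : ℝ)) with hm
  set ms : Equiv.Perm S → Measure 𝒵 := fun σ => mix μ (fun x => c (σ x)) with hms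
  haveI : IsFiniteMeasure m := mix_isFiniteMeasure μ _
  haveI : ∀ σ, IsFiniteMeasure (ms σ) := fun σ => mix_isFiniteMeasure μ _
  haveI : IsFiniteMeasure (mix μ c) := mix_isFiniteMeasure μ c
  -- the measure identity
  have hkey_meas : ∑ σ : Equiv.Perm S, ms σ = (N : ℝ≥0∞) • m := sum_perm_mix μ hc
  -- absolute continuity and integrability for each permuted mixture
  have hfin : ∀ σ : Equiv.Perm S, ν ≪ ms σ ∧ Integrable (llr ν (ms σ)) ν := by
    intro σ
    refine klDiv_ne_top_elim ?_
    rw [hms]; simp only []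
    rw [hperm c hc σ]; exact htop
  have hc_c : ν ≪ mix μ c ∧ Integrable (llr ν (mix μ c)) ν :=
    klDiv_ne_top_elim htop
  -- ν ≪ m
  have hacm : ν ≪ m := by
    refine hc_c.1.trans (Measure.AbsolutelyContinuous.mk fun s _ hs0 => ?_)
    have hsum0 : (∑ σ : Equiv.Perm S, ms σ) s = 0 := by
      rw [hkey_meas, Measure.smul_apply, hs0, smul_zero]
    rw [Measure.finset_sum_apply] at hsum0
    have h1 : ms 1 s = 0 :=
      (Finset.sum_eq_zero_iff.1 hsum0) 1 (Finset.mem_univ 1)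
    have : mix μ c = ms 1 := by simp [hms]
    rw [this, h1]
  -- rnDeriv facts
  set F : Equiv.Perm S → 𝒵 → ℝ≥0∞ := fun σ => (ms σ).rnDeriv ν with hF
  have hrn_sum : (N : ℝ≥0∞) • m.rnDeriv ν =ᵐ[ν] fun z => ∑ σ : Equiv.Perm S, F σ z := by
    have h1 : ((N : ℝ≥0∞) • m).rnDeriv ν =ᵐ[ν] (N : ℝ≥0∞) • m.rnDeriv ν :=
      Measure.rnDeriv_smul_left_of_ne_top m ν (by simp)
    have h2 : (∑ σ : Equiv.Perm S, ms σ).rnDeriv ν =ᵐ[ν] ∑ σ : Equiv.Perm S, F σ :=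
      rnDeriv_finset_sum Finset.univ ms ν
    rw [← hkey_meas] at h1
    filter_upwards [h1.symm.trans h2] with z hz
    simpa using hz
  -- positivity and finiteness of F σ, a.e.
  have hFpos : ∀ σ : Equiv.Perm S, ∀ᵐ z ∂ν, 0 < F σ z := by
    intro σ
    have hinv : (ν.rnDeriv (ms σ))⁻¹ =ᵐ[ν] (ms σ).rnDeriv ν := Measure.inv_rnDeriv (hfin σ).1
    have hlt : ∀ᵐ z ∂ν, ν.rnDeriv (ms σ) z < ∞ := (hfin σ).1.ae_le (Measure.rnDeriv_lt_top ν (ms σ))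
    filter_upwards [hinv, hlt] with z h1 h2
    rw [hF]; simp only []
    rw [← h1]
    exact ENNReal.inv_pos.2 h2.ne
  have hFlt : ∀ σ : Equiv.Perm S, ∀ᵐ z ∂ν, F σ z < ∞ := fun σ => Measure.rnDeriv_lt_top (ms σ) ν
  have hmlt : ∀ᵐ z ∂ν, m.rnDeriv ν z < ∞ := Measure.rnDeriv_lt_top m ν
  -- llr expressions
  have hllr_m : llr ν m =ᵐ[ν] fun z => - Real.log ((m.rnDeriv ν z).toReal) := by
    have := neg_llr hacm
    filter_upwards [this] with z hz
    have : llr ν m z = - llr m ν z := by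
      rw [← hz]; simp
    rw [this, llr]
  have hllr_ms : ∀ σ : Equiv.Perm S, llr ν (ms σ) =ᵐ[ν]
      fun z => - Real.log ((F σ z).toReal) := by
    intro σ
    have := neg_llr (hfin σ).1
    filter_upwards [this] with z hz
    have h : llr ν (ms σ) z = - llr (ms σ) ν z := by
      rw [← hz]; simp
    rw [h, llr]
  -- main pointwise inequality
  have h_ae_all_pos : ∀ᵐ z ∂ν, ∀ σ : Equiv.Perm S, 0 < F σ z := ae_all_iff.2 hFpos
  have h_ae_all_lt : ∀ᵐ z ∂ν, ∀ σ : Equiv.Perm S, F σ z < ∞ := ae_all_iff.2 hFlt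
  -- toReal version of the key identity
  have h_toReal : ∀ᵐ z ∂ν, (m.rnDeriv ν z).toReal =
      ∑ σ : Equiv.Perm S, (1 / (N : ℝ)) * (F σ z).toReal := by
    filter_upwards [hrn_sum, h_ae_all_lt, hmlt] with z hz hlt hmz
    have hz' : (N : ℝ≥0∞) * m.rnDeriv ν z = ∑ σ : Equiv.Perm S, F σ z := by
      simpa using hz
    have h2 : ((N : ℝ≥0∞) * m.rnDeriv ν z).toReal = (N : ℝ) * (m.rnDeriv ν z).toReal := by
      rw [ENNReal.toReal_mul]; simp
    have h3 : (∑ σ : Equiv.Perm S, F σ z).toReal = ∑ σ : Equiv.Perm S, (F σ z).toReal :=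
      ENNReal.toReal_sum fun σ _ => (hlt σ).ne
    have h4 : (N : ℝ) * (m.rnDeriv ν z).toReal = ∑ σ : Equiv.Perm S, (F σ z).toReal := by
      rw [← h2, hz', h3]
    rw [Finset.sum_congr rfl (fun σ _ => by ring_nf : ∀ σ ∈ Finset.univ,
      (1 / (N : ℝ)) * (F σ z).toReal = (F σ z).toReal * (N : ℝ)⁻¹), ← Finset.sum_mul]
    rw [← h4]
    field_simp
  -- a.e. positivity of m.rnDeriv
  have hmpos : ∀ᵐ z ∂ν, 0 < (m.rnDeriv ν z).toReal := by
    filter_upwards [h_toReal, h_ae_all_pos, h_ae_all_lt] with z h1 h2 h3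
    rw [h1]
    refine Finset.sum_pos (fun σ _ => ?_) ⟨1, Finset.mem_univ 1⟩
    have : 0 < (F σ z).toReal := ENNReal.toReal_pos (h2 σ).ne' (h3 σ).ne
    positivity
  -- Jensen: llr ν m ≤ avg of llr ν (ms σ), a.e.
  have hJensen : ∀ᵐ z ∂ν, llr ν m z ≤
      ∑ σ : Equiv.Perm S, (1 / (N : ℝ)) * llr ν (ms σ) z := by
    have h_all_llr : ∀ᵐ z ∂ν, ∀ σ : Equiv.Perm S,
        llr ν (ms σ) z = - Real.log ((F σ z).toReal) :=
      ae_all_iff.2 fun σ => hllr_ms σ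
    filter_upwards [hllr_m, h_all_llr, h_toReal, h_ae_all_pos, h_ae_all_lt] with z hm1 hms1 ht hp hl
    rw [hm1]
    have hjen : ∑ σ : Equiv.Perm S, (1 / (N : ℝ)) • Real.log ((F σ z).toReal) ≤
        Real.log (∑ σ : Equiv.Perm S, (1 / (N : ℝ)) • (F σ z).toReal) := by
      refine (strictConcaveOn_log_Ioi.concaveOn).le_map_sum (fun σ _ => by positivity) ?_
        (fun σ _ => ENNReal.toReal_pos (hp σ).ne' (hl σ).ne)
      rw [Finset.sum_const, Finset.card_univ, ← hN, nsmul_eq_mul]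
      rw [mul_one_div, div_self hNR.ne']
    simp only [smul_eq_mul] at hjen
    rw [← ht] at hjen
    have : ∑ σ : Equiv.Perm S, (1 / (N : ℝ)) * llr ν (ms σ) z =
        - ∑ σ : Equiv.Perm S, (1 / (N : ℝ)) * Real.log ((F σ z).toReal) := by
      rw [← Finset.sum_neg_distrib]
      exact Finset.sum_congr rfl fun σ _ => by rw [hms1 σ]; ring
    rw [this]
    linarith
  -- lower bound for llr ν m
  have h_lower : ∀ᵐ z ∂ν, 1 - (m.rnDeriv ν z).toReal ≤ llr ν m z := by
    filter_upwards [hllr_m, hmpos] with z h1 h2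
    rw [h1]
    have := Real.log_le_sub_one_of_pos h2
    linarith
  -- integrability of llr ν m
  have h_int_toReal : Integrable (fun z => (m.rnDeriv ν z).toReal) ν :=
    integrable_toReal_of_lintegral_ne_top (Measure.measurable_rnDeriv m ν).aemeasurable
      (Measure.lintegral_rnDeriv_lt_top m ν).ne
  set g : 𝒵 → ℝ := fun z => ∑ σ : Equiv.Perm S, (1 / (N : ℝ)) * llr ν (ms σ) z
    with hg
  have hg_int : Integrable g ν := by
    refine integrable_finset_sum _ fun σ _ => ((hfin σ).2.const_mul _)
  set b : 𝒵 → ℝ := fun z => 1 - (m.rnDeriv ν z).toReal with hb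
  have hb_int : Integrable b ν := (integrable_const (1 : ℝ)).sub h_int_toReal
  have h_int : Integrable (llr ν m) ν := by
    refine Integrable.mono' (hg_int.abs.add hb_int.abs)
      (measurable_llr ν m).aestronglyMeasurable ?_
    filter_upwards [hJensen, h_lower] with z h1 h2
    have h1' : llr ν m z ≤ g z := h1
    have h2' : b z ≤ llr ν m z := h2
    show ‖llr ν m z‖ ≤ |g z| + |b z|
    rw [Real.norm_eq_abs, abs_le]
    have hga := le_abs_self (g z)
    have hba := neg_abs_le (b z)
    have hgn := abs_nonneg (g z)
    have hbn := abs_nonneg (b z)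
    constructor <;> linarith
  -- compute klDiv ν m and bound the integral
  have h_integral_le : ∫ z, llr ν m z ∂ν ≤
      ∑ σ : Equiv.Perm S, (1 / (N : ℝ)) * ∫ z, llr ν (ms σ) z ∂ν := by
    refine le_trans (integral_mono_ae h_int hg_int hJensen) ?_
    rw [hg, integral_finset_sum _ fun σ _ => ((hfin σ).2.const_mul _)]
    refine le_of_eq (Finset.sum_congr rfl fun σ _ => ?_)
    rw [integral_const_mul]
  -- final ENNReal chain
  rw [klDiv_eq_ofReal hacm h_int]
  have hci : klDiv ν (mix μ c) = ENNReal.ofReal (∫ z, llr ν (mix μ c) z ∂ν) :=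
    klDiv_eq_ofReal hc_c.1 hc_c.2
  have hσi : ∀ σ : Equiv.Perm S,
      ENNReal.ofReal (∫ z, llr ν (ms σ) z ∂ν) = klDiv ν (mix μ c) := by
    intro σ
    rw [← hperm c hc σ, ← klDiv_eq_ofReal (hfin σ).1 (hfin σ).2]
  calc ENNReal.ofReal (∫ z, llr ν m z ∂ν)
      ≤ ENNReal.ofReal (∑ σ : Equiv.Perm S,
          (1 / (N : ℝ)) * ∫ z, llr ν (ms σ) z ∂ν) :=
        ENNReal.ofReal_le_ofReal h_integral_le
    _ ≤ ∑ σ : Equiv.Perm S, ENNReal.ofReal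
          ((1 / (N : ℝ)) * ∫ z, llr ν (ms σ) z ∂ν) := by
        exact ofReal_sum_le' _ _
    _ = ∑ σ : Equiv.Perm S, ENNReal.ofReal (1 / (N : ℝ)) *
          ENNReal.ofReal (∫ z, llr ν (ms σ) z ∂ν) := by
        refine Finset.sum_congr rfl fun σ _ => ?_
        rw [ENNReal.ofReal_mul (by positivity)]
    _ = (N : ℝ≥0∞) * (ENNReal.ofReal (1 / (N : ℝ)) * klDiv ν (mix μ c)) := by
        rw [Finset.sum_congr rfl fun σ _ => by rw [hσi σ]]
        rw [Finset.sum_const, Finset.card_univ, ← hN, nsmul_eq_mul]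
    _ = klDiv ν (mix μ c) := by
        rw [← mul_assoc]
        have : (N : ℝ≥0∞) * ENNReal.ofReal (1 / (N : ℝ)) = 1 := by
          rw [ENNReal.ofReal_div_of_pos hNR, ENNReal.ofReal_one, ENNReal.ofReal_natCast]
          rw [ENNReal.mul_div_cancel' (by exact_mod_cast hNpos.ne') (by simp)]
        rw [this, one_mul]
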